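/- arXiv:2406.14160 — 8 statements merged into one kernel-verified Lean document; each statement's English description precedes it below -/
import Mathlib

section
/- The real vector space of d-dimensional zero-sum matrices of order n (matrices whose entries sum to 0 along every line) has dimension (n−1)^d. -/
set_option synthInstance.maxHeartbeats 1000000
set_option maxHeartbeats 1000000

/-- The linear subspace of `d`-dimensional zero-sum matrices of order `n`. -/
def zeroSumSubmodule (n d : ℕ) : Submodule ℝ ((Fin d → Fin n) → ℝ) where
  carrier := {A | ∀ (α : Fin d → Fin n) (i : Fin d), ∑ j : Fin n, A (Function.update α i j) = 0}
  add_mem' := by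
    intro a b ha hb α i
    simp only [Pi.add_apply, Finset.sum_add_distrib, ha α i, hb α i, add_zero]
  zero_mem' := by intro α i; simp
  smul_mem' := by
    intro c a ha α i
    simp only [Pi.smul_apply, smul_eq_mul, ← Finset.mul_sum, ha α i, mul_zero]

lemma finrank_sumKer (W : Type*) [AddCommGroup W] [Module ℝ W] [FiniteDimensional ℝ W] (n : ℕ) :
    Module.finrank ℝ (LinearMap.ker (∑ j : Fin n, LinearMap.proj (R := ℝ) (φ := fun _ : Fin n => W) j)) =
      (n - 1) * Module.finrank ℝ W := by
  set L := ∑ j : Fin n, LinearMap.proj (R := ℝ) (φ := fun _ : Fin n => W) j with hL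
  rcases Nat.eq_zero_or_pos n with h0 | hpos
  · subst h0
    have : Subsingleton (Fin 0 → W) := by infer_instance
    simp [Module.finrank_zero_of_subsingleton]
  · have hsurj : Function.Surjective L := by
      intro w
      refine ⟨Pi.single ⟨0, hpos⟩ w, ?_⟩
      simp [hL, LinearMap.sum_apply, Pi.single_apply, Finset.sum_ite_eq']
    have hrn := LinearMap.finrank_range_add_finrank_ker L
    rw [LinearMap.range_eq_top.2 hsurj] at hrn
    have hpi : Module.finrank ℝ (Fin n → W) = n * Module.finrank ℝ W := by
      rw [Module.finrank_pi_fintype]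
      simp [Finset.sum_const, mul_comm]
    rw [finrank_top] at hrn
    have := Nat.sub_mul n 1 (Module.finrank ℝ W)
    omega

lemma zeroSum_mem {n d : ℕ} {A : (Fin d → Fin n) → ℝ} :
    A ∈ zeroSumSubmodule n d ↔
      ∀ (α : Fin d → Fin n) (i : Fin d), ∑ j : Fin n, A (Function.update α i j) = 0 :=
  Iff.rfl

noncomputable def zeroSumEquiv (n d : ℕ) :
    zeroSumSubmodule n (d + 1) ≃ₗ[ℝ]
      LinearMap.ker (∑ j : Fin n,
        LinearMap.proj (R := ℝ) (φ := fun _ : Fin n => zeroSumSubmodule n d) j) where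
  toFun A := ⟨fun j => ⟨fun β => A.1 (Fin.cons j β), by
      intro β i
      have := A.2 (Fin.cons j β) i.succ
      simpa [← Fin.cons_update] using this⟩, by
    simp only [LinearMap.mem_ker, LinearMap.sum_apply, LinearMap.proj_apply]
    ext β
    rw [AddSubmonoidClass.coe_finset_sum, Finset.sum_apply]
    cases isEmpty_or_nonempty (Fin n) with
    | inl h => simp
    | inr h =>
      obtain ⟨j₀⟩ := h
      calc ∑ j : Fin n, A.1 (Fin.cons j β)
          = ∑ j : Fin n, A.1 (Function.update (Fin.cons j₀ β) 0 j) := by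
            simp [Fin.update_cons_zero]
        _ = 0 := A.2 (Fin.cons j₀ β) 0⟩
  invFun w := ⟨fun α => (w.1 (α 0)).1 (Fin.tail α), by
    intro α i
    induction i using Fin.cases with
    | zero =>
      have hw := w.2
      simp only [LinearMap.mem_ker, LinearMap.sum_apply, LinearMap.proj_apply] at hw
      have : ∑ j : Fin n, (w.1 j).1 (Fin.tail α) = 0 := by
        have h2 := congrFun (congrArg Subtype.val hw) (Fin.tail α)
        simpa [AddSubmonoidClass.coe_finset_sum, Finset.sum_apply] using h2
      simpa [Fin.tail_update_zero] using this
    | succ i =>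
      have := (w.1 (α 0)).2 (Fin.tail α) i
      simpa [Fin.tail_update_succ, Function.update_of_ne (Fin.succ_ne_zero i).symm] using this⟩
  map_add' A B := rfl
  map_smul' c A := rfl
  left_inv A := by
    ext α
    simp [Fin.cons_self_tail]
  right_inv w := by
    ext j β
    simp

/-- The space of `d`-dimensional zero-sum matrices of order `n` has dimension `(n-1)^d`. -/
theorem finrank_zeroSum (n d : ℕ) :
    Module.finrank ℝ (zeroSumSubmodule n d) = (n - 1) ^ d := by
  induction d with
  | zero =>
    have htop : zeroSumSubmodule n 0 = ⊤ := by
      ext A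
      simp only [Submodule.mem_top, iff_true]
      exact fun α i => i.elim0
    rw [htop, finrank_top, Module.finrank_pi, pow_zero]
    simp
  | succ d ih =>
    haveI : FiniteDimensional ℝ (zeroSumSubmodule n d) :=
      FiniteDimensional.finiteDimensional_submodule _
    have hk := finrank_sumKer (zeroSumSubmodule n d) n
    have he : Module.finrank ℝ (zeroSumSubmodule n (d + 1)) =
        Module.finrank ℝ (LinearMap.ker (∑ j : Fin n,
          LinearMap.proj (R := ℝ) (φ := fun _ : Fin n => zeroSumSubmodule n d) j)) :=
      (zeroSumEquiv n d).finrank_eq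
    rw [he, hk, ih, pow_succ, mul_comm]
end

section
/- Let 0 < ε ≤ 1/2 and H(ε) = −ε·log₂ε − (1−ε)·log₂(1−ε). For every d and every natural number N ≤ 2^{d(1−H(ε))}, there exists a set S ⊆ (Fin 2)^d of size N such that any two distinct elements of S have Hamming distance at least εd. -/
open Finset Real

lemma gv_weight (ε : ℝ) (hε0 : 0 < ε) (hε : ε ≤ 1/2) (d i : ℕ) (hid : i ≤ d)
    (hi : (i : ℝ) ≤ ε * d) :
    (2 : ℝ) ^ (-(d : ℝ) * (-ε * Real.logb 2 ε - (1 - ε) * Real.logb 2 (1 - ε)))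
      ≤ ε ^ i * (1 - ε) ^ (d - i) := by
  have h1ε : 0 < 1 - ε := by linarith
  set x : ℝ := (i : ℝ) with hx
  have hdx : ((d - i : ℕ) : ℝ) = (d : ℝ) - x := by rw [Nat.cast_sub hid]
  have e1 : ∀ t : ℝ, (2:ℝ) ^ (Real.logb 2 ε * t) = ε ^ t := by
    intro t
    rw [Real.rpow_mul (by norm_num : (0:ℝ) ≤ 2), Real.rpow_logb (by norm_num) (by norm_num) hε0]
  have e2 : ∀ t : ℝ, (2:ℝ) ^ (Real.logb 2 (1-ε) * t) = (1-ε) ^ t := by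
    intro t
    rw [Real.rpow_mul (by norm_num : (0:ℝ) ≤ 2), Real.rpow_logb (by norm_num) (by norm_num) h1ε]
  have heq : (2 : ℝ) ^ (-(d : ℝ) * (-ε * Real.logb 2 ε - (1 - ε) * Real.logb 2 (1 - ε)))
      = ε ^ (ε * d) * (1 - ε) ^ ((1 - ε) * d) := by
    rw [← e1, ← e2, ← Real.rpow_add (by norm_num : (0:ℝ) < 2)]
    ring_nf
  rw [heq]
  have hsplit : ε ^ (ε * (d:ℝ)) * (1 - ε) ^ ((1 - ε) * (d:ℝ))
      = (ε ^ x * (1 - ε) ^ ((d : ℝ) - x)) * (ε ^ (ε * d - x) * (1 - ε) ^ (x - ε * d)) := by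
    rw [mul_mul_mul_comm, ← Real.rpow_add hε0, ← Real.rpow_add h1ε]
    ring_nf
  have hfac : ε ^ (ε * (d:ℝ) - x) * (1 - ε) ^ (x - ε * d) ≤ 1 := by
    have : ε ^ (ε * (d:ℝ) - x) * (1 - ε) ^ (x - ε * d) = (ε / (1 - ε)) ^ (ε * (d:ℝ) - x) := by
      rw [Real.div_rpow hε0.le h1ε.le, show x - ε * (d:ℝ) = -(ε * d - x) by ring,
        Real.rpow_neg h1ε.le, div_eq_mul_inv]
    rw [this]
    exact Real.rpow_le_one (div_nonneg hε0.le h1ε.le)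
      ((div_le_one h1ε).2 (by linarith)) (by linarith)
  calc ε ^ (ε * (d:ℝ)) * (1 - ε) ^ ((1 - ε) * (d:ℝ))
      = (ε ^ x * (1 - ε) ^ ((d : ℝ) - x)) * (ε ^ (ε * d - x) * (1 - ε) ^ (x - ε * d)) := hsplit
    _ ≤ (ε ^ x * (1 - ε) ^ ((d : ℝ) - x)) * 1 := by
        apply mul_le_mul_of_nonneg_left hfac
        positivity
    _ = ε ^ i * (1 - ε) ^ (d - i) := by
        rw [mul_one, ← hdx, hx, Real.rpow_natCast, Real.rpow_natCast]

lemma gv_sum (ε : ℝ) (hε0 : 0 < ε) (hε : ε ≤ 1/2) (d : ℕ) :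
    ((∑ i ∈ (Finset.range (d+1)).filter (fun i : ℕ => (i:ℝ) < ε * d), d.choose i : ℕ) : ℝ)
      ≤ (2 : ℝ) ^ ((d : ℝ) * (-ε * Real.logb 2 ε - (1 - ε) * Real.logb 2 (1 - ε))) := by
  set H : ℝ := -ε * Real.logb 2 ε - (1 - ε) * Real.logb 2 (1 - ε) with hH
  have h1ε : 0 < 1 - ε := by linarith
  have hpow : (0:ℝ) < (2:ℝ) ^ ((d:ℝ) * H) := Real.rpow_pos_of_pos (by norm_num) _
  have key : (∑ i ∈ (Finset.range (d+1)).filter (fun i : ℕ => (i:ℝ) < ε * d),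
      (d.choose i : ℝ)) * (2:ℝ) ^ (-(d:ℝ) * H) ≤ 1 := by
    rw [Finset.sum_mul]
    calc ∑ i ∈ (Finset.range (d+1)).filter (fun i : ℕ => (i:ℝ) < ε * d),
          (d.choose i : ℝ) * (2:ℝ) ^ (-(d:ℝ) * H)
        ≤ ∑ i ∈ (Finset.range (d+1)).filter (fun i : ℕ => (i:ℝ) < ε * d),
          ε ^ i * (1 - ε) ^ (d - i) * (d.choose i : ℝ) := by
          apply Finset.sum_le_sum
          intro i hi
          rw [Finset.mem_filter, Finset.mem_range] at hi
          rw [mul_comm ((d.choose i : ℝ))]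
          apply mul_le_mul_of_nonneg_right _ (Nat.cast_nonneg _)
          exact gv_weight ε hε0 hε d i (by omega) hi.2.le
      _ ≤ ∑ i ∈ Finset.range (d+1), ε ^ i * (1 - ε) ^ (d - i) * (d.choose i : ℝ) := by
          apply Finset.sum_le_sum_of_subset_of_nonneg (Finset.filter_subset _ _)
          intro i _ _
          positivity
      _ = 1 := by rw [← add_pow]; norm_num
  have hinv : (2:ℝ) ^ (-(d:ℝ) * H) * (2:ℝ) ^ ((d:ℝ) * H) = 1 := by
    rw [← Real.rpow_add (by norm_num)]; ring_nf; norm_num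
  push_cast
  calc (∑ i ∈ (Finset.range (d+1)).filter (fun i : ℕ => (i:ℝ) < ε * d), (d.choose i : ℝ))
      = (∑ i ∈ (Finset.range (d+1)).filter (fun i : ℕ => (i:ℝ) < ε * d), (d.choose i : ℝ))
        * (2:ℝ) ^ (-(d:ℝ) * H) * (2:ℝ) ^ ((d:ℝ) * H) := by rw [mul_assoc, hinv, mul_one]
    _ ≤ 1 * (2:ℝ) ^ ((d:ℝ) * H) := mul_le_mul_of_nonneg_right key hpow.le
    _ = _ := by rw [one_mul]

lemma fin2_aux : ∀ a b c : Fin 2, a ≠ b → a ≠ c → b = c := by decide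
lemma fin2_ne : ∀ a : Fin 2, a ≠ a + 1 := by decide

lemma gv_ball (d : ℕ) (ε : ℝ) (α : Fin d → Fin 2) :
    (Finset.univ.filter (fun β => (hammingDist α β : ℝ) < ε * d)).card
      = ∑ i ∈ (Finset.range (d+1)).filter (fun i : ℕ => (i:ℝ) < ε * d), d.choose i := by
  classical
  set T : Finset (Finset (Fin d)) :=
    ((Finset.range (d+1)).filter (fun i : ℕ => (i:ℝ) < ε * d)).biUnion
      (fun i => Finset.powersetCard i Finset.univ) with hT
  have hcardT : T.card = ∑ i ∈ (Finset.range (d+1)).filter (fun i : ℕ => (i:ℝ) < ε * d),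
      d.choose i := by
    rw [hT, Finset.card_biUnion]
    · apply Finset.sum_congr rfl
      intro i _
      rw [Finset.card_powersetCard, Finset.card_univ, Fintype.card_fin]
    · intro x hx y hy hxy
      apply Finset.disjoint_left.2
      intro s hs hs'
      rw [Finset.mem_powersetCard_univ] at hs hs'
      exact hxy (hs ▸ hs')
  rw [← hcardT]
  have hdist : ∀ β : Fin d → Fin 2,
      hammingDist α β = (Finset.univ.filter (fun j => α j ≠ β j)).card := fun β => rfl
  apply Finset.card_bij (fun β _ => Finset.univ.filter (fun j => α j ≠ β j))
  · intro β hβ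
    rw [Finset.mem_filter] at hβ
    rw [hT, Finset.mem_biUnion]
    refine ⟨hammingDist α β, ?_, ?_⟩
    · rw [Finset.mem_filter, Finset.mem_range]
      exact ⟨Nat.lt_succ_of_le (hammingDist_le_card_fintype.trans_eq (Fintype.card_fin d)), hβ.2⟩
    · rw [Finset.mem_powersetCard_univ, ← hdist]
  · intro β₁ h₁ β₂ h₂ h
    have hmem : ∀ j, (α j ≠ β₁ j) ↔ (α j ≠ β₂ j) := by
      intro j
      constructor <;> intro hj
      · have : j ∈ Finset.univ.filter (fun j => α j ≠ β₂ j) := by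
          rw [← h, Finset.mem_filter]; exact ⟨Finset.mem_univ j, hj⟩
        exact (Finset.mem_filter.1 this).2
      · have : j ∈ Finset.univ.filter (fun j => α j ≠ β₁ j) := by
          rw [h, Finset.mem_filter]; exact ⟨Finset.mem_univ j, hj⟩
        exact (Finset.mem_filter.1 this).2
    funext j
    by_cases hj : α j ≠ β₁ j
    · exact fin2_aux (α j) (β₁ j) (β₂ j) hj ((hmem j).1 hj)
    · have hj2 := (not_iff_not.2 (hmem j)).1 hj
      push_neg at hj hj2
      rw [← hj, ← hj2]
  · intro s hs
    rw [hT, Finset.mem_biUnion] at hs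
    obtain ⟨i, hi, hsi⟩ := hs
    rw [Finset.mem_filter, Finset.mem_range] at hi
    rw [Finset.mem_powersetCard_univ] at hsi
    refine ⟨fun j => if j ∈ s then α j + 1 else α j, ?_, ?_⟩
    · rw [Finset.mem_filter]
      refine ⟨Finset.mem_univ _, ?_⟩
      have heq : (Finset.univ.filter
          (fun j => α j ≠ (fun j => if j ∈ s then α j + 1 else α j) j)) = s := by
        ext j
        simp only [Finset.mem_filter, Finset.mem_univ, true_and]
        by_cases hj : j ∈ s <;> simp [hj, fin2_ne (α j)]
      rw [hdist, heq, hsi]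
      exact hi.2
    · ext j
      simp only [Finset.mem_filter, Finset.mem_univ, true_and]
      by_cases hj : j ∈ s <;> simp [hj, fin2_ne (α j)]

/-- Gilbert–Varshamov type bound: for `0 < ε ≤ 1/2` and `N ≤ 2^{d(1 - H(ε))}`, there is a
binary code of length `d`, size `N`, and minimum Hamming distance at least `ε d`. -/
theorem binary_code_exists (ε : ℝ) (hε0 : 0 < ε) (hε : ε ≤ 1/2) (d N : ℕ)
    (hN : (N : ℝ) ≤ (2 : ℝ) ^ ((d : ℝ) * (1 - (-ε * Real.logb 2 ε - (1 - ε) * Real.logb 2 (1 - ε))))) :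
    ∃ S : Finset (Fin d → Fin 2), S.card = N ∧
      ∀ α ∈ S, ∀ β ∈ S, α ≠ β → ε * d ≤ (hammingDist α β : ℝ) := by
  classical
  by_cases hd : d = 0
  · subst hd
    have hN1 : N ≤ 1 := by
      have h1 : (N:ℝ) ≤ 1 := by simpa using hN
      exact_mod_cast h1
    have hcard : N ≤ (Finset.univ : Finset (Fin 0 → Fin 2)).card := by
      simp only [Finset.card_univ]
      simpa using hN1
    obtain ⟨S, _, hS⟩ := Finset.exists_subset_card_eq hcard
    exact ⟨S, hS, fun α _ β _ _ => by simp⟩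
  · have hdpos : (0:ℝ) < (d:ℝ) := by
      exact_mod_cast Nat.pos_of_ne_zero hd
    set H : ℝ := -ε * Real.logb 2 ε - (1 - ε) * Real.logb 2 (1 - ε) with hH
    have hHpow : (0:ℝ) < (2:ℝ) ^ ((d:ℝ) * H) := Real.rpow_pos_of_pos (by norm_num) _
    have hNtot : (N:ℝ) * (2:ℝ) ^ ((d:ℝ) * H) ≤ ((2^d : ℕ) : ℝ) := by
      calc (N:ℝ) * (2:ℝ) ^ ((d:ℝ) * H)
          ≤ (2:ℝ) ^ ((d:ℝ) * (1 - H)) * (2:ℝ) ^ ((d:ℝ) * H) :=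
            mul_le_mul_of_nonneg_right hN hHpow.le
        _ = (2:ℝ) ^ ((d:ℝ) * (1 - H) + (d:ℝ) * H) := (Real.rpow_add (by norm_num) _ _).symm
        _ = (2:ℝ) ^ ((d:ℕ):ℝ) := by ring_nf
        _ = ((2^d : ℕ) : ℝ) := by rw [Real.rpow_natCast]; push_cast; ring
    suffices h : ∀ n, n ≤ N → ∃ S : Finset (Fin d → Fin 2), S.card = n ∧
        ∀ α ∈ S, ∀ β ∈ S, α ≠ β → ε * d ≤ (hammingDist α β : ℝ) from h N le_rfl
    intro n
    induction n with
    | zero => exact fun _ => ⟨∅, by simp, by simp⟩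
    | succ n ih =>
      intro hn
      obtain ⟨S, hScard, hSdist⟩ := ih (by omega)
      set covered := S.biUnion
        (fun γ => Finset.univ.filter (fun β => (hammingDist γ β : ℝ) < ε * d)) with hcovered
      have hcovcard : (covered.card : ℝ) < ((2^d : ℕ) : ℝ) := by
        have h1 : covered.card ≤ ∑ γ ∈ S,
            (Finset.univ.filter (fun β => (hammingDist γ β : ℝ) < ε * d)).card :=
          Finset.card_biUnion_le
        have h2 : (covered.card : ℝ) ≤ (n : ℝ) * (2:ℝ) ^ ((d:ℝ) * H) := by
          calc (covered.card : ℝ) ≤ (∑ γ ∈ S,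
              (Finset.univ.filter (fun β => (hammingDist γ β : ℝ) < ε * d)).card : ℕ) := by
                exact_mod_cast h1
            _ = (n : ℝ) * ((∑ i ∈ (Finset.range (d+1)).filter
                  (fun i : ℕ => (i:ℝ) < ε * d), d.choose i : ℕ) : ℝ) := by
                rw [Finset.sum_congr rfl (fun γ _ => gv_ball d ε γ), Finset.sum_const, hScard,
                  smul_eq_mul, Nat.cast_mul]
            _ ≤ (n : ℝ) * (2:ℝ) ^ ((d:ℝ) * H) :=
                mul_le_mul_of_nonneg_left (gv_sum ε hε0 hε d) (Nat.cast_nonneg _)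
        have hnN : (n : ℝ) ≤ (N : ℝ) - 1 := by
          have : (n:ℕ) + 1 ≤ N := hn
          have := Nat.cast_le (α := ℝ).2 this
          push_cast at this
          linarith
        calc (covered.card : ℝ) ≤ (n : ℝ) * (2:ℝ) ^ ((d:ℝ) * H) := h2
          _ ≤ ((N : ℝ) - 1) * (2:ℝ) ^ ((d:ℝ) * H) :=
              mul_le_mul_of_nonneg_right hnN hHpow.le
          _ = (N:ℝ) * (2:ℝ) ^ ((d:ℝ) * H) - (2:ℝ) ^ ((d:ℝ) * H) := by ring
          _ < (N:ℝ) * (2:ℝ) ^ ((d:ℝ) * H) := by linarith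
          _ ≤ ((2^d : ℕ) : ℝ) := hNtot
      have hcovlt : covered.card < (Finset.univ : Finset (Fin d → Fin 2)).card := by
        have huniv : (Finset.univ : Finset (Fin d → Fin 2)).card = 2^d := by
          simp [Finset.card_univ]
        rw [huniv]
        exact_mod_cast hcovcard
      have hnotsub : ¬ (Finset.univ : Finset (Fin d → Fin 2)) ⊆ covered := fun hsub =>
        absurd (Finset.card_le_card hsub) (by omega)
      obtain ⟨β, _, hβ⟩ := Finset.not_subset.1 hnotsub
      have hβball : ∀ γ ∈ S, ¬ ((hammingDist γ β : ℝ) < ε * d) := by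
        intro γ hγ hlt
        exact hβ (Finset.mem_biUnion.2 ⟨γ, hγ, Finset.mem_filter.2 ⟨Finset.mem_univ _, hlt⟩⟩)
      have hβS : β ∉ S := by
        intro hβS
        exact hβball β hβS (by simp [mul_pos hε0 hdpos])
      refine ⟨insert β S, by rw [Finset.card_insert_of_notMem hβS, hScard], ?_⟩
      intro a ha b hb hab
      rcases Finset.mem_insert.1 ha with ha' | ha' <;>
        rcases Finset.mem_insert.1 hb with hb' | hb'
      · exact absurd (ha'.trans hb'.symm) hab
      · subst ha'
        have := hβball b hb'
        rw [hammingDist_comm]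
        linarith [not_lt.1 this]
      · subst hb'
        exact not_lt.1 (hβball a ha')
      · exact hSdist a ha' b hb' hab
end

section
/- Let 0 < ε ≤ 1/2. For every N ≤ 2^{(1−H(ε))d} there exists an ε-sparse set S ⊆ (Fin 3)^d of size N, where H is the binary entropy function. -/
open Finset

/-- A set `S ⊆ (Fin 3)^d` is `ε`-sparse if pairwise Hamming distances are at least `εd`
and every `α ∈ S` is the unique element of `S` at distance `d` from some index `γ`. -/
def EpsSparse {d : ℕ} (ε : ℝ) (S : Finset (Fin d → Fin 3)) : Prop :=
  (∀ α ∈ S, ∀ β ∈ S, α ≠ β → ε * d ≤ (hammingDist α β : ℝ)) ∧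
  ∀ α ∈ S, ∃ γ : Fin d → Fin 3, S.filter (fun β => hammingDist γ β = d) = {α}

lemma sphere_card_le (d i : ℕ) (α : Fin d → Fin 2) :
    (univ.filter fun β => hammingDist α β = i).card ≤ d.choose i := by
  have hc : (univ.powersetCard i : Finset (Finset (Fin d))).card = d.choose i := by
    simp [Finset.card_powersetCard]
  rw [← hc]
  apply Finset.card_le_card_of_injOn (fun β => univ.filter fun j => α j ≠ β j)
  · intro β hβ
    simp only [Finset.mem_coe, mem_filter, mem_univ, true_and] at hβ
    rw [Finset.mem_coe, Finset.mem_powersetCard]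
    exact ⟨subset_univ _, hβ⟩
  · intro β hβ β' hβ' h
    funext j
    dsimp only at h
    have h1 : (j ∈ univ.filter fun j => α j ≠ β j) ↔ (j ∈ univ.filter fun j => α j ≠ β' j) := by rw [h]
    simp only [mem_filter, mem_univ, true_and] at h1
    by_cases hb : α j = β j
    · have : ¬ α j ≠ β' j := by rw [← h1]; simp [hb]
      push_neg at this; rw [← hb, this]
    · have hb' : α j ≠ β' j := h1.mp hb
      have b1 := (β j).is_lt; have b2 := (β' j).is_lt; have b3 := (α j).is_lt
      have : (β j).val ≠ (α j).val := fun hh => hb (Fin.ext hh.symm)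
      have : (β' j).val ≠ (α j).val := fun hh => hb' (Fin.ext hh.symm)
      apply Fin.ext; omega

lemma ball_card_le (d n : ℕ) (α : Fin d → Fin 2) :
    (univ.filter fun β => hammingDist α β < n).card ≤ ∑ i ∈ range n, d.choose i := by
  have hsub : (univ.filter fun β => hammingDist α β < n) ⊆
      (range n).biUnion (fun i => univ.filter fun β => hammingDist α β = i) := by
    intro β hβ
    simp only [mem_filter, mem_univ, true_and] at hβ
    simp only [mem_biUnion, mem_range, mem_filter, mem_univ, true_and]
    exact ⟨_, hβ, rfl⟩
  calc _ ≤ ((range n).biUnion (fun i => univ.filter fun β => hammingDist α β = i)).card :=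
        Finset.card_le_card hsub
    _ ≤ ∑ i ∈ range n, (univ.filter fun β => hammingDist α β = i).card := Finset.card_biUnion_le
    _ ≤ _ := Finset.sum_le_sum fun i _ => sphere_card_le d i α

lemma gv (d n : ℕ) (hn : 1 ≤ n) :
    ∀ N, N * (∑ i ∈ range n, d.choose i) ≤ 2 ^ d →
    ∃ S : Finset (Fin d → Fin 2), S.card = N ∧
      ∀ α ∈ S, ∀ β ∈ S, α ≠ β → n ≤ hammingDist α β := by
  intro N
  induction N with
  | zero => intro _; exact ⟨∅, by simp⟩
  | succ N ih =>
    intro hN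
    have hV : 1 ≤ ∑ i ∈ range n, d.choose i := by
      calc 1 = d.choose 0 := by simp
        _ ≤ _ := Finset.single_le_sum (f := fun i => d.choose i) (fun _ _ => Nat.zero_le _)
            (mem_range.mpr hn)
    obtain ⟨S, hcard, hdist⟩ := ih (le_trans (Nat.mul_le_mul_right _ (Nat.le_succ N)) hN)
    set U := S.biUnion (fun α => univ.filter fun β => hammingDist α β < n) with hU
    have hUcard : U.card < 2 ^ d := by
      calc U.card ≤ ∑ α ∈ S, (univ.filter fun β => hammingDist α β < n).card :=
            Finset.card_biUnion_le
        _ ≤ ∑ _α ∈ S, ∑ i ∈ range n, d.choose i :=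
            Finset.sum_le_sum fun α _ => ball_card_le d n α
        _ = N * ∑ i ∈ range n, d.choose i := by rw [Finset.sum_const, hcard]; ring
        _ < (N + 1) * ∑ i ∈ range n, d.choose i := by
            have h0 : 0 < ∑ i ∈ range n, d.choose i := hV
            nlinarith
        _ ≤ 2 ^ d := hN
    have : U ≠ univ := by
      intro h
      rw [h, Finset.card_univ] at hUcard
      simp [Fintype.card_fun] at hUcard
    obtain ⟨γ, hγ⟩ : ∃ γ, γ ∉ U := by
      by_contra hh
      push_neg at hh
      exact this (Finset.eq_univ_iff_forall.mpr hh)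
    have hfar : ∀ α ∈ S, n ≤ hammingDist α γ := by
      intro α hα
      by_contra hlt
      push_neg at hlt
      exact hγ (Finset.mem_biUnion.mpr ⟨α, hα, by simp [hlt]⟩)
    have hγS : γ ∉ S := by
      intro hγS
      exact hγ (Finset.mem_biUnion.mpr ⟨γ, hγS, by simp; omega⟩)
    refine ⟨insert γ S, by rw [Finset.card_insert_of_notMem hγS, hcard], ?_⟩
    intro α hα β hβ hne
    rcases Finset.mem_insert.mp hα with rfl | hα' <;>
      rcases Finset.mem_insert.mp hβ with rfl | hβ'
    · exact absurd rfl hne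
    · rw [hammingDist_comm]; exact hfar β hβ'
    · exact hfar α hα'
    · exact hdist α hα' β hβ' hne

lemma vol_le (ε : ℝ) (hε0 : 0 < ε) (hε : ε ≤ 1/2) (d : ℕ) :
    ((∑ i ∈ range (max 1 ⌈ε * d⌉₊), d.choose i : ℕ) : ℝ) ≤
      2 ^ ((-ε * Real.logb 2 ε - (1 - ε) * Real.logb 2 (1 - ε)) * d) := by
  have hq0 : 0 < 1 - ε := by linarith
  have hpq : ε ≤ 1 - ε := by linarith
  set n := max 1 ⌈ε * (d:ℕ)⌉₊ with hn
  set H := -ε * Real.logb 2 ε - (1 - ε) * Real.logb 2 (1 - ε) with hH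
  have hεd0 : (0:ℝ) ≤ ε * d := by positivity
  have hile : ∀ i ∈ range n, (i:ℝ) ≤ ε * d := by
    intro i hi
    rw [mem_range] at hi
    rcases Nat.eq_zero_or_pos i with rfl | hi1
    · simpa using hεd0
    · have hceil : i < ⌈ε * (d:ℕ)⌉₊ := by
        rcases le_or_gt (⌈ε * (d:ℕ)⌉₊) 1 with h | h <;> omega
      have h1 : (i:ℝ) + 1 ≤ (⌈ε * (d:ℕ)⌉₊ : ℝ) := by exact_mod_cast hceil
      have h2 : (⌈ε * (d:ℕ)⌉₊ : ℝ) < ε * d + 1 := Nat.ceil_lt_add_one hεd0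
      linarith
  have hnd : n ≤ d + 1 := by
    have : ⌈ε * (d:ℕ)⌉₊ ≤ d := Nat.ceil_le.mpr (by
      calc ε * d ≤ 1 * d := by
            apply mul_le_mul_of_nonneg_right _ (Nat.cast_nonneg d); linarith
        _ = d := one_mul _)
    omega
  have hLpq : Real.logb 2 ε ≤ Real.logb 2 (1 - ε) :=
    Real.logb_le_logb_of_le (by norm_num) hε0 hpq
  have hterm : ∀ i ∈ range n, (2:ℝ) ^ (-H * d) ≤ ε ^ i * (1 - ε) ^ (d - i) := by
    intro i hi
    have hid : i ≤ d := by rw [mem_range] at hi; omega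
    have hiε : (i:ℝ) ≤ ε * d := hile i hi
    have hpi : (2:ℝ) ^ (Real.logb 2 ε * (i:ℝ)) = ε ^ i := by
      rw [Real.rpow_mul (by norm_num : (0:ℝ) ≤ 2),
        Real.rpow_logb (by norm_num) (by norm_num) hε0, Real.rpow_natCast]
    have hqi : (2:ℝ) ^ (Real.logb 2 (1 - ε) * ((d:ℝ) - i)) = (1 - ε) ^ (d - i) := by
      rw [Real.rpow_mul (by norm_num : (0:ℝ) ≤ 2),
        Real.rpow_logb (by norm_num) (by norm_num) hq0,
        show ((d:ℝ) - (i:ℝ)) = ((d - i : ℕ) : ℝ) by push_cast [hid]; ring, Real.rpow_natCast]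
    rw [← hpi, ← hqi, ← Real.rpow_add (by norm_num)]
    apply Real.rpow_le_rpow_of_exponent_le (by norm_num)
    have key : 0 ≤ ((ε * d) - i) * (Real.logb 2 (1 - ε) - Real.logb 2 ε) :=
      mul_nonneg (by linarith) (by linarith)
    have expand : Real.logb 2 ε * (i:ℝ) + Real.logb 2 (1 - ε) * ((d:ℝ) - i) - (-H * d)
        = ((ε * d) - i) * (Real.logb 2 (1 - ε) - Real.logb 2 ε) := by
      rw [hH]; ring
    linarith
  have hbin : ∑ i ∈ range (d + 1), ε ^ i * (1 - ε) ^ (d - i) * (d.choose i : ℝ) = 1 := by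
    have h := add_pow ε (1 - ε) d
    rw [show ε + (1 - ε) = 1 by ring, one_pow] at h
    rw [← h]
  have hsum : (∑ i ∈ range n, (d.choose i : ℝ)) * (2:ℝ) ^ (-H * d) ≤ 1 := by
    rw [Finset.sum_mul]
    calc ∑ i ∈ range n, (d.choose i : ℝ) * (2:ℝ) ^ (-H * d)
        ≤ ∑ i ∈ range n, ε ^ i * (1 - ε) ^ (d - i) * (d.choose i : ℝ) := by
          apply Finset.sum_le_sum
          intro i hi
          rw [mul_comm ((d.choose i : ℝ))]
          exact mul_le_mul_of_nonneg_right (hterm i hi) (Nat.cast_nonneg _)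
      _ ≤ ∑ i ∈ range (d + 1), ε ^ i * (1 - ε) ^ (d - i) * (d.choose i : ℝ) := by
          apply Finset.sum_le_sum_of_subset_of_nonneg (Finset.range_subset_range.mpr hnd)
          intro i _ _
          positivity
      _ = 1 := hbin
  have hE : (0:ℝ) < (2:ℝ) ^ (H * d) := by positivity
  have hinv : (2:ℝ) ^ (-H * d) = ((2:ℝ) ^ (H * d))⁻¹ := by
    rw [show -H * d = -(H * d) by ring, Real.rpow_neg (by norm_num)]
  push_cast
  rw [hinv] at hsum
  calc (∑ i ∈ range n, (d.choose i : ℝ))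
      = (∑ i ∈ range n, (d.choose i : ℝ)) * ((2:ℝ) ^ (H * d))⁻¹ * (2:ℝ) ^ (H * d) := by
        field_simp
    _ ≤ 1 * (2:ℝ) ^ (H * d) := mul_le_mul_of_nonneg_right hsum (le_of_lt hE)
    _ = _ := by rw [one_mul]

lemma dist_eq_d_iff {d : ℕ} (x y : Fin d → Fin 3) :
    hammingDist x y = d ↔ ∀ i, x i ≠ y i := by
  have hd : hammingDist x y = (filter (fun i => x i ≠ y i) univ).card := rfl
  constructor
  · intro h i
    have hu : (filter (fun i => x i ≠ y i) univ) = univ := by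
      apply Finset.eq_univ_of_card
      rw [← hd, h, Fintype.card_fin]
    have : i ∈ filter (fun i => x i ≠ y i) univ := by rw [hu]; exact mem_univ i
    simpa using this
  · intro h
    rw [hd, show (filter (fun i => x i ≠ y i) univ) = univ from
      Finset.eq_univ_iff_forall.mpr (fun i => by simpa using h i)]
    simp

/-- For `0 < ε ≤ 1/2` and every `N ≤ 2^{(1 - H(ε)) d}` there is an `ε`-sparse set of
size `N` in `(Fin 3)^d`. -/
theorem eps_sparse_exists (ε : ℝ) (hε0 : 0 < ε) (hε : ε ≤ 1/2) (d N : ℕ)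
    (hN : (N : ℝ) ≤ (2 : ℝ) ^ ((1 - (-ε * Real.logb 2 ε - (1 - ε) * Real.logb 2 (1 - ε))) * d)) :
    ∃ S : Finset (Fin d → Fin 3), S.card = N ∧ EpsSparse ε S := by
  classical
  set H := -ε * Real.logb 2 ε - (1 - ε) * Real.logb 2 (1 - ε) with hH
  set n := max 1 ⌈ε * (d:ℕ)⌉₊ with hn
  set V := ∑ i ∈ Finset.range n, d.choose i with hV
  -- N * V ≤ 2 ^ d
  have hNV : N * V ≤ 2 ^ d := by
    have hvol : (V : ℝ) ≤ (2:ℝ) ^ (H * d) := vol_le ε hε0 hε d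
    have h1 : (N:ℝ) * V ≤ (2:ℝ) ^ ((1 - H) * d) * (2:ℝ) ^ (H * d) :=
      mul_le_mul hN hvol (Nat.cast_nonneg _) (by positivity)
    have h2 : (2:ℝ) ^ ((1 - H) * d) * (2:ℝ) ^ (H * d) = ((2 ^ d : ℕ) : ℝ) := by
      rw [← Real.rpow_add (by norm_num), show (1 - H) * d + H * d = ((d:ℕ):ℝ) by ring,
        Real.rpow_natCast]
      push_cast
      ring
    rw [h2] at h1
    exact_mod_cast h1
  obtain ⟨S₀, hcard, hdist⟩ := gv d n (le_max_left _ _) N hNV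
  set g : Fin 2 → Fin 3 := Fin.castLE (by norm_num) with hg
  have hginj : Function.Injective g := Fin.castLE_injective _
  set emb : (Fin d → Fin 2) → (Fin d → Fin 3) := fun α i => g (α i) with hemb
  have hembinj : Function.Injective emb := fun a b h => funext fun i => hginj (congrFun h i)
  refine ⟨S₀.image emb, by rw [Finset.card_image_of_injective _ hembinj, hcard], ?_, ?_⟩
  · -- pairwise distance
    intro α' hα' β' hβ' hne
    obtain ⟨α, hα, rfl⟩ := Finset.mem_image.mp hα'
    obtain ⟨β, hβ, rfl⟩ := Finset.mem_image.mp hβ'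
    have hab : α ≠ β := fun h => hne (by rw [h])
    have hd : hammingDist (emb α) (emb β) = hammingDist α β :=
      hammingDist_comp (fun _ => g) (fun _ => hginj)
    have h1 : n ≤ hammingDist α β := hdist α hα β hβ hab
    have h2 : ε * d ≤ (n : ℝ) := by
      calc ε * d ≤ (⌈ε * (d:ℕ)⌉₊ : ℝ) := Nat.le_ceil _
        _ ≤ (n : ℝ) := by exact_mod_cast le_max_right 1 _
    rw [hd]
    calc ε * d ≤ (n:ℝ) := h2
      _ ≤ _ := by exact_mod_cast h1
  · -- uniqueness witnesses
    intro α' hα'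
    obtain ⟨α, hα, rfl⟩ := Finset.mem_image.mp hα'
    refine ⟨emb (fun i => 1 - α i), ?_⟩
    have hne2 : ∀ a : Fin 2, 1 - a ≠ a := by decide
    have heq2 : ∀ a b : Fin 2, b ≠ 1 - a → b = a := by decide
    ext x
    simp only [Finset.mem_filter, Finset.mem_singleton, Finset.mem_image]
    constructor
    · rintro ⟨⟨β, hβ, rfl⟩, hdx⟩
      have hall := (dist_eq_d_iff _ _).mp hdx
      have : β = α := by
        funext i
        exact heq2 (α i) (β i) (fun h => hall i (by simp only [hemb]; rw [h]))
      rw [this]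
    · rintro rfl
      refine ⟨⟨α, hα, rfl⟩, (dist_eq_d_iff _ _).mpr fun i => ?_⟩
      intro h
      exact hne2 (α i) (hginj h)
end

section
/- Let S ⊆ (Fin 3)^d be a set such that any two distinct elements are at Hamming distance at least εd, and let |S| = N. Define M' = ∑_{α∈S} F^α where F^α_β = (−1/2)^{ρ(α,β)}. Then for every α ∈ S, |1 − M'_α| ≤ N·2^{−εd}. -/
/-- If elements of `S` are pairwise at Hamming distance at least `εd` and
`M' = ∑_{γ ∈ S} F^γ` with `F^γ_β = (-1/2)^{ρ(γ,β)}`, then for every `α ∈ S`,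
`|1 - M'_α| ≤ N · 2^{-εd}` where `N = |S|`. -/
theorem Mprime_close_to_one {d : ℕ} (ε : ℝ) (S : Finset (Fin d → Fin 3))
    (hdist : ∀ α ∈ S, ∀ β ∈ S, α ≠ β → ε * d ≤ (hammingDist α β : ℝ)) :
    ∀ α ∈ S,
      |1 - ∑ γ ∈ S, ((-1/2 : ℝ)) ^ (hammingDist γ α)| ≤ (S.card : ℝ) * (2 : ℝ) ^ (-(ε * d)) := by
  intro α hα
  rw [← Finset.add_sum_erase S _ hα, hammingDist_self, pow_zero]
  have h1 : |1 - (1 + ∑ γ ∈ S.erase α, ((-1/2 : ℝ)) ^ (hammingDist γ α))|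
      = |∑ γ ∈ S.erase α, ((-1/2 : ℝ)) ^ (hammingDist γ α)| := by
    ring_nf
    rw [abs_neg]
  rw [h1]
  calc |∑ γ ∈ S.erase α, ((-1/2 : ℝ)) ^ (hammingDist γ α)|
      ≤ ∑ γ ∈ S.erase α, |((-1/2 : ℝ)) ^ (hammingDist γ α)| := Finset.abs_sum_le_sum_abs _ _
    _ ≤ ∑ γ ∈ S.erase α, (2 : ℝ) ^ (-(ε * d)) := by
        apply Finset.sum_le_sum
        intro γ hγ
        have hγS := Finset.mem_of_mem_erase hγ
        have hne := Finset.ne_of_mem_erase hγ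
        have hd := hdist γ hγS α hα hne
        have : |((-1/2 : ℝ)) ^ (hammingDist γ α)| = (2:ℝ) ^ (-(hammingDist γ α : ℝ)) := by
          rw [abs_pow, Real.rpow_neg (by norm_num), Real.rpow_natCast]
          rw [abs_div, abs_neg, abs_one, abs_two, div_pow, one_pow, one_div]
        rw [this]
        exact Real.rpow_le_rpow_of_exponent_le (by norm_num) (by linarith)
    _ = (S.erase α).card * (2 : ℝ) ^ (-(ε * d)) := by rw [Finset.sum_const, nsmul_eq_mul]
    _ ≤ (S.card : ℝ) * (2 : ℝ) ^ (-(ε * d)) := by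
        apply mul_le_mul_of_nonneg_right
        · exact_mod_cast Finset.card_le_card (Finset.erase_subset _ _)
        · positivity
end

section
/- Let d ≥ 14/ε and let S ⊆ (Fin 3)^d be an ε-sparse set with |S| ≤ 2^{εd/4}. Then there exists a d-dimensional polystochastic matrix A of order 3 whose support is exactly (Fin 3)^d ∖ S. -/
/-- A matrix is polystochastic if nonnegative with all line sums 1. -/
def Polystochastic {n d : ℕ} (A : (Fin d → Fin n) → ℝ) : Prop :=
  (∀ α, 0 ≤ A α) ∧ ∀ (α : Fin d → Fin n) (i : Fin d), ∑ j : Fin n, A (Function.update α i j) = 1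

open Finset Function
open scoped NNReal

namespace SPaux

variable {d : ℕ}

noncomputable def g (a b : Fin 3) : ℝ := if a = b then 1 else -(1/2)

noncomputable def B (α β : Fin d → Fin 3) : ℝ := ∏ i, g (α i) (β i)

theorem g_sum (a : Fin 3) : ∑ j : Fin 3, g a j = 0 := by
  fin_cases a <;> simp [Fin.sum_univ_three, g] <;> norm_num

theorem B_eq_pow (α β : Fin d → Fin 3) :
    B α β = (-(1/2) : ℝ) ^ hammingDist α β := by
  rw [B, hammingDist]
  rw [← Finset.prod_filter_mul_prod_filter_not Finset.univ (fun i => α i = β i)]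
  have h1 : ∀ i ∈ Finset.univ.filter (fun i => α i = β i), g (α i) (β i) = 1 := by
    intro i hi; simp only [Finset.mem_filter] at hi; simp [g, hi.2]
  have h2 : ∀ i ∈ Finset.univ.filter (fun i => ¬ α i = β i), g (α i) (β i) = -(1/2) := by
    intro i hi; simp only [Finset.mem_filter] at hi; simp [g, hi.2]
  rw [Finset.prod_congr rfl h1, Finset.prod_congr rfl h2]
  simp [Finset.filter_ne']

theorem B_abs (α β : Fin d → Fin 3) : |B α β| = (1/2 : ℝ) ^ hammingDist α β := by
  rw [B_eq_pow, abs_pow]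
  congr 1
  rw [abs_neg]
  norm_num

theorem B_self (α : Fin d → Fin 3) : B α α = 1 := by
  simp [B_eq_pow]

theorem B_line (α β : Fin d → Fin 3) (i : Fin d) :
    ∑ j : Fin 3, B α (Function.update β i j) = 0 := by
  have h : ∀ j : Fin 3, B α (Function.update β i j)
      = g (α i) j * ∏ k ∈ Finset.univ.erase i, g (α k) (β k) := by
    intro j
    rw [B, ← Finset.mul_prod_erase Finset.univ _ (Finset.mem_univ i)]
    congr 1
    · simp
    · exact Finset.prod_congr rfl fun k hk => by
        rw [Function.update_of_ne (Finset.mem_erase.mp hk).1]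
  simp_rw [h, ← Finset.sum_mul, g_sum, zero_mul]

/-- the map whose fixed point gives the coefficients -/
noncomputable def Phi (S : Finset (Fin d → Fin 3)) (t : (Fin d → Fin 3) → ℝ) :
    (Fin d → Fin 3) → ℝ :=
  fun β => if β ∈ S then 1/3 - ∑ α ∈ S.erase β, t α * B α β else 0

theorem phi_lip (S : Finset (Fin d → Fin 3))
    (hb : ∀ β ∈ S, ∑ α ∈ S.erase β, |B α β| ≤ 1/2) :
    ContractingWith (1/2) (Phi S) := by
  refine ⟨by rw [← NNReal.coe_lt_coe]; norm_num, LipschitzWith.of_dist_le_mul fun t s => ?_⟩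
  rw [dist_pi_le_iff (by positivity)]
  intro β
  by_cases hβ : β ∈ S
  · simp only [Phi, if_pos hβ, Real.dist_eq]
    have hsub : (1/3 - ∑ α ∈ S.erase β, t α * B α β) - (1/3 - ∑ α ∈ S.erase β, s α * B α β)
        = ∑ α ∈ S.erase β, (s α - t α) * B α β := by
      rw [Finset.sum_congr rfl (fun α _ => sub_mul (s α) (t α) (B α β)),
        Finset.sum_sub_distrib]
      ring
    rw [hsub]
    calc |∑ α ∈ S.erase β, (s α - t α) * B α β|
        ≤ ∑ α ∈ S.erase β, |(s α - t α) * B α β| := Finset.abs_sum_le_sum_abs _ _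
      _ ≤ ∑ α ∈ S.erase β, dist t s * |B α β| := by
          refine Finset.sum_le_sum fun α _ => ?_
          rw [abs_mul]
          refine mul_le_mul_of_nonneg_right ?_ (abs_nonneg _)
          rw [abs_sub_comm, ← Real.dist_eq]
          exact dist_le_pi_dist t s α
      _ = dist t s * ∑ α ∈ S.erase β, |B α β| := by rw [← Finset.mul_sum]
      _ ≤ dist t s * (1/2) := by
          exact mul_le_mul_of_nonneg_left (hb β hβ) dist_nonneg
      _ = ((1/2 : ℝ≥0) : ℝ) * dist t s := by push_cast; ring
  · simp only [Phi, if_neg hβ, dist_self]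
    positivity

end SPaux

open SPaux

/-- If `d ≥ 14/ε` and `S` is `ε`-sparse with `|S| ≤ 2^{εd/4}`, then there is a
polystochastic matrix of order 3 whose support is exactly the complement of `S`. -/
theorem sparse_to_polystochastic {d : ℕ} (ε : ℝ) (hε : 0 < ε) (hd : 14 / ε ≤ (d : ℝ))
    (S : Finset (Fin d → Fin 3)) (hS : EpsSparse ε S)
    (hcard : (S.card : ℝ) ≤ (2 : ℝ) ^ (ε * d / 4)) :
    ∃ A : (Fin d → Fin 3) → ℝ, Polystochastic A ∧ ∀ α, A α ≠ 0 ↔ α ∉ S := by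
  obtain ⟨hpair, -⟩ := hS
  have h14 : (14:ℝ) ≤ ε * d := by
    rw [div_le_iff₀ hε] at hd; linarith
  set e : ℝ := ε * d with he
  -- basic power estimate
  have hpow : ∀ (n : ℕ) (x : ℝ), x ≤ n → ((1/2:ℝ)) ^ n ≤ (2:ℝ) ^ (-x) := by
    intro n x hx
    have h1 : ((1/2:ℝ)) ^ n = (2:ℝ) ^ (-(n:ℝ)) := by
      rw [Real.rpow_neg (by norm_num : (0:ℝ) ≤ 2), Real.rpow_natCast]
      simp [one_div, inv_pow]
    rw [h1]
    exact Real.rpow_le_rpow_of_exponent_le (by norm_num) (by linarith)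
  have h2rpos : ∀ x : ℝ, (0:ℝ) ≤ (2:ℝ) ^ x := fun x => (Real.rpow_pos_of_pos two_pos x).le
  -- the key small-sum estimate inside S
  have hK : ∀ β ∈ S, ∑ α ∈ S.erase β, |B α β| ≤ 1/1024 := by
    intro β hβ
    have h1 : ∀ α ∈ S.erase β, |B α β| ≤ (2:ℝ) ^ (-e) := by
      intro α hα
      rw [B_abs]
      exact hpow _ _ (hpair α (Finset.mem_of_mem_erase hα) β hβ (Finset.ne_of_mem_erase hα))
    calc ∑ α ∈ S.erase β, |B α β|
        ≤ (S.erase β).card • ((2:ℝ)^(-e)) := Finset.sum_le_card_nsmul _ _ _ h1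
      _ = ((S.erase β).card : ℝ) * (2:ℝ)^(-e) := by simp [nsmul_eq_mul]
      _ ≤ (2:ℝ)^(e/4) * (2:ℝ)^(-e) := by
          refine mul_le_mul_of_nonneg_right ?_ (h2rpos _)
          calc ((S.erase β).card : ℝ) ≤ (S.card : ℝ) := by
                exact_mod_cast Finset.card_le_card (Finset.erase_subset _ _)
            _ ≤ _ := hcard
      _ = (2:ℝ)^(e/4 - e) := by rw [← Real.rpow_add (by norm_num)]; ring_nf
      _ ≤ (2:ℝ)^(-(10:ℝ)) := Real.rpow_le_rpow_of_exponent_le (by norm_num) (by linarith)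
      _ = 1/1024 := by
          rw [show (-(10:ℝ)) = ((-10 : ℤ) : ℝ) by norm_num, Real.rpow_intCast]
          norm_num
  -- fixed point
  have hcontr : ContractingWith (1/2) (Phi S) :=
    phi_lip S (fun β hβ => le_trans (hK β hβ) (by norm_num))
  set t : (Fin d → Fin 3) → ℝ := ContractingWith.fixedPoint (Phi S) hcontr with ht
  have htfix : ∀ β, t β = Phi S t β := fun β =>
    (congrFun (ContractingWith.fixedPoint_isFixedPt hcontr) β).symm
  have htS : ∀ β ∈ S, t β = 1/3 - ∑ α ∈ S.erase β, t α * B α β := by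
    intro β hβ; rw [htfix β]; simp [Phi, hβ]
  have ht0 : ∀ β ∉ S, t β = 0 := by
    intro β hβ; rw [htfix β]; simp [Phi, hβ]
  -- norm bound on t
  have hTb : ‖t‖ ≤ 17/50 := by
    have hb : ∀ β, |t β| ≤ 1/3 + (1/1024) * ‖t‖ := by
      intro β
      by_cases hβ : β ∈ S
      · rw [htS β hβ]
        have hX : |∑ α ∈ S.erase β, t α * B α β| ≤ (1/1024) * ‖t‖ := by
          calc |∑ α ∈ S.erase β, t α * B α β|
              ≤ ∑ α ∈ S.erase β, |t α * B α β| := Finset.abs_sum_le_sum_abs _ _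
            _ ≤ ∑ α ∈ S.erase β, ‖t‖ * |B α β| := by
                refine Finset.sum_le_sum fun α _ => ?_
                rw [abs_mul]
                refine mul_le_mul_of_nonneg_right ?_ (abs_nonneg _)
                simpa [Real.norm_eq_abs] using norm_le_pi_norm t α
            _ = ‖t‖ * ∑ α ∈ S.erase β, |B α β| := by rw [← Finset.mul_sum]
            _ ≤ ‖t‖ * (1/1024) := mul_le_mul_of_nonneg_left (hK β hβ) (norm_nonneg t)
            _ = (1/1024) * ‖t‖ := by ring
        have := abs_add_le (1/3 : ℝ) (-(∑ α ∈ S.erase β, t α * B α β))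
        rw [← sub_eq_add_neg, abs_neg] at this
        calc |1/3 - ∑ α ∈ S.erase β, t α * B α β| ≤ |(1/3:ℝ)| + |∑ α ∈ S.erase β, t α * B α β| := this
          _ ≤ 1/3 + (1/1024) * ‖t‖ := by
              rw [abs_of_nonneg (by norm_num : (0:ℝ) ≤ 1/3)]
              linarith
      · rw [ht0 β hβ]
        simp
        positivity
    have h2 : ‖t‖ ≤ 1/3 + (1/1024) * ‖t‖ := by
      refine (pi_norm_le_iff_of_nonneg (by positivity)).mpr fun β => ?_
      simpa [Real.norm_eq_abs] using hb β
    linarith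
  -- the matrix
  set A : (Fin d → Fin 3) → ℝ := fun β => 1/3 - ∑ α ∈ S, t α * B α β with hA
  have hAS : ∀ α ∈ S, A α = 0 := by
    intro α hα
    have hsplit : ∑ α' ∈ S, t α' * B α' α
        = t α * B α α + ∑ α' ∈ S.erase α, t α' * B α' α :=
      (Finset.add_sum_erase S _ hα).symm
    rw [hA]
    simp only []
    rw [hsplit, B_self, mul_one]
    have := htS α hα
    linarith
  -- positivity off S
  have hApos : ∀ β, β ∉ S → 0 < A β := by
    intro β hβ
    have hsum58 : ∑ α ∈ S, |B α β| ≤ 5/8 := by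
      have hsplit := Finset.sum_filter_add_sum_filter_not S
        (fun α => (hammingDist α β : ℝ) < e/2) (fun α => |B α β|)
      set N := S.filter (fun α => (hammingDist α β : ℝ) < e/2) with hN
      set F := S.filter (fun α => ¬ (hammingDist α β : ℝ) < e/2) with hF
      have hN1 : N.card ≤ 1 := by
        rw [Finset.card_le_one]
        intro a ha b hb
        by_contra hab
        rw [hN, Finset.mem_filter] at ha hb
        have h1 := hpair a ha.1 b hb.1 hab
        have htri : (hammingDist a b : ℝ) ≤ (hammingDist a β : ℝ) + (hammingDist b β : ℝ) := by
          have := hammingDist_triangle a β b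
          rw [hammingDist_comm β b] at this
          exact_mod_cast this
        linarith [ha.2, hb.2]
      have hNsum : ∑ α ∈ N, |B α β| ≤ 1/2 := by
        have hterm : ∀ α ∈ N, |B α β| ≤ 1/2 := by
          intro α hα
          rw [B_abs]
          have hne : α ≠ β := fun h => hβ (h ▸ (Finset.mem_filter.mp hα).1)
          have h1 : 1 ≤ hammingDist α β := Nat.one_le_iff_ne_zero.mpr (hammingDist_ne_zero.mpr hne)
          calc (1/2:ℝ)^hammingDist α β ≤ (1/2:ℝ)^1 :=
                pow_le_pow_of_le_one (by norm_num) (by norm_num) h1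
            _ = 1/2 := pow_one _
        calc ∑ α ∈ N, |B α β| ≤ N.card • ((1:ℝ)/2) := Finset.sum_le_card_nsmul _ _ _ hterm
          _ = (N.card : ℝ) * (1/2) := by simp [nsmul_eq_mul]
          _ ≤ 1 * (1/2) := by
              refine mul_le_mul_of_nonneg_right ?_ (by norm_num)
              exact_mod_cast hN1
          _ = 1/2 := by norm_num
      have hFsum : ∑ α ∈ F, |B α β| ≤ 1/8 := by
        have hterm : ∀ α ∈ F, |B α β| ≤ (2:ℝ)^(-(e/2)) := by
          intro α hα
          rw [B_abs]
          refine hpow _ _ ?_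
          have := (Finset.mem_filter.mp hα).2
          push_neg at this
          linarith
        calc ∑ α ∈ F, |B α β| ≤ F.card • ((2:ℝ)^(-(e/2))) := Finset.sum_le_card_nsmul _ _ _ hterm
          _ = (F.card : ℝ) * (2:ℝ)^(-(e/2)) := by simp [nsmul_eq_mul]
          _ ≤ (2:ℝ)^(e/4) * (2:ℝ)^(-(e/2)) := by
              refine mul_le_mul_of_nonneg_right ?_ (h2rpos _)
              calc (F.card : ℝ) ≤ (S.card : ℝ) := by
                    exact_mod_cast Finset.card_le_card (Finset.filter_subset _ _)
                _ ≤ _ := hcard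
          _ = (2:ℝ)^(e/4 - e/2) := by rw [← Real.rpow_add (by norm_num)]; ring_nf
          _ ≤ (2:ℝ)^(-(3:ℝ)) := Real.rpow_le_rpow_of_exponent_le (by norm_num) (by linarith)
          _ = 1/8 := by
              rw [show (-(3:ℝ)) = ((-3 : ℤ) : ℝ) by norm_num, Real.rpow_intCast]
              norm_num
      linarith [hsplit, hNsum, hFsum]
    have hX : |∑ α ∈ S, t α * B α β| ≤ (17/50) * (5/8) := by
      calc |∑ α ∈ S, t α * B α β| ≤ ∑ α ∈ S, |t α * B α β| := Finset.abs_sum_le_sum_abs _ _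
        _ ≤ ∑ α ∈ S, ‖t‖ * |B α β| := by
            refine Finset.sum_le_sum fun α _ => ?_
            rw [abs_mul]
            refine mul_le_mul_of_nonneg_right ?_ (abs_nonneg _)
            simpa [Real.norm_eq_abs] using norm_le_pi_norm t α
        _ = ‖t‖ * ∑ α ∈ S, |B α β| := by rw [← Finset.mul_sum]
        _ ≤ (17/50) * (5/8) := by
            refine mul_le_mul hTb hsum58 ?_ (by norm_num)
            positivity
    rw [hA]
    simp only []
    have := abs_le.mp hX
    linarith [this.2]
  refine ⟨A, ⟨?_, ?_⟩, ?_⟩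
  · intro β
    by_cases hβ : β ∈ S
    · rw [hAS β hβ]
    · exact (hApos β hβ).le
  · intro β i
    rw [hA]
    simp only []
    rw [Finset.sum_sub_distrib]
    have h1 : ∑ _j : Fin 3, (1/3 : ℝ) = 1 := by norm_num
    have h2 : ∑ j : Fin 3, ∑ α ∈ S, t α * B α (Function.update β i j) = 0 := by
      rw [Finset.sum_comm]
      refine Finset.sum_eq_zero fun α _ => ?_
      rw [← Finset.mul_sum, B_line, mul_zero]
    rw [h1, h2, sub_zero]
  · intro α
    constructor
    · intro hne hα
      exact hne (hAS α hα)
    · intro hα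
      exact (hApos α hα).ne'
end

section
/- For every α ∈ (Fin 3)^d, every γ with T_γ ∩ S = {α} (for a given set S), and every real δ, the matrix R defined by R_β = (−1)^{ρ(α,β)}·δ for β ∈ T_γ and R_β = 0 otherwise, is a zero-sum matrix. -/
lemma hd_full {d : ℕ} (γ x : Fin d → Fin 3) :
    hammingDist γ x = d ↔ ∀ k, γ k ≠ x k := by
  rw [hammingDist]
  constructor
  · intro h k
    by_contra hne
    have hsub : Finset.filter (fun i => γ i ≠ x i) Finset.univ ⊆ Finset.univ.erase k := by
      intro m hm
      simp only [Finset.mem_filter, Finset.mem_univ, true_and] at hm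
      refine Finset.mem_erase.mpr ⟨fun hmk => hm (hmk ▸ hne), Finset.mem_univ m⟩
    have h1 := Finset.card_le_card hsub
    rw [h, Finset.card_erase_of_mem (Finset.mem_univ k), Finset.card_univ,
      Fintype.card_fin] at h1
    have : 0 < d := k.pos
    omega
  · intro h
    rw [Finset.filter_true_of_mem (fun k _ => h k), Finset.card_univ, Fintype.card_fin]

lemma hd_update {d : ℕ} (α β : Fin d → Fin 3) (i : Fin d) (j : Fin 3) :
    hammingDist α (Function.update β i j) =
      (if α i ≠ j then 1 else 0) +
        ∑ k ∈ Finset.univ.erase i, (if α k ≠ β k then 1 else 0) := by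
  rw [hammingDist, Finset.card_filter]
  rw [← Finset.add_sum_erase _ _ (Finset.mem_univ i)]
  congr 1
  · simp
  · apply Finset.sum_congr rfl
    intro k hk
    have : k ≠ i := (Finset.mem_erase.mp hk).1
    simp [Function.update_of_ne this]

/-- The matrix `R` supported on `T_γ` with entries `(-1)^{ρ(α,β)} · δ` is zero-sum. -/
theorem R_zero_sum {d : ℕ} (S : Set (Fin d → Fin 3)) (α γ : Fin d → Fin 3) (δ : ℝ)
    (hγ : {β : Fin d → Fin 3 | hammingDist γ β = d} ∩ S = {α}) :
    ∀ (β : Fin d → Fin 3) (i : Fin d),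
      ∑ j : Fin 3,
        (if hammingDist γ (Function.update β i j) = d then
          ((-1 : ℝ)) ^ (hammingDist α (Function.update β i j)) * δ else 0) = 0 := by
  have hα : ∀ k, γ k ≠ α k := by
    have : α ∈ {β : Fin d → Fin 3 | hammingDist γ β = d} ∩ S := by
      rw [hγ]; rfl
    exact (hd_full γ α).mp this.1
  intro β i
  by_cases hB : ∀ k, k ≠ i → γ k ≠ β k
  · -- condition ↔ j ≠ γ i
    have hcond : ∀ j : Fin 3, (hammingDist γ (Function.update β i j) = d) ↔ j ≠ γ i := by
      intro j
      rw [hd_full]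
      constructor
      · intro h hj
        exact h i (by simp [hj])
      · intro hj k
        rcases eq_or_ne k i with rfl | hk
        · simpa using fun h => hj h.symm
        · simpa [Function.update_of_ne hk] using hB k hk
    have hupd : ∀ j : Fin 3, hammingDist α (Function.update β i j) =
        (if α i ≠ j then 1 else 0) +
          ∑ k ∈ Finset.univ.erase i, (if α k ≠ β k then 1 else 0) :=
      fun j => hd_update α β i j
    set c : ℕ := ∑ k ∈ Finset.univ.erase i, (if α k ≠ β k then 1 else 0) with hc
    calc ∑ j : Fin 3,
        (if hammingDist γ (Function.update β i j) = d then
          ((-1 : ℝ)) ^ (hammingDist α (Function.update β i j)) * δ else 0)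
        = ∑ j : Fin 3, (if j ≠ γ i then
            ((-1 : ℝ)) ^ ((if α i ≠ j then 1 else 0) + c) * δ else 0) := by
          apply Finset.sum_congr rfl
          intro j _
          by_cases hj : j ≠ γ i
          · rw [if_pos ((hcond j).mpr hj), if_pos hj, hupd j]
          · rw [if_neg (fun h => hj ((hcond j).mp h)), if_neg hj]
      _ = 0 := by
          have hγα : γ i ≠ α i := hα i
          generalize γ i = gi at *
          generalize α i = ai at *
          fin_cases gi <;> fin_cases ai <;>
            simp_all [Fin.sum_univ_three, pow_succ] <;> ring
  · push_neg at hB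
    obtain ⟨k, hk, hgb⟩ := hB
    apply Finset.sum_eq_zero
    intro j _
    rw [if_neg]
    intro h
    exact ((hd_full γ _).mp h k) (by simpa [Function.update_of_ne hk] using hgb)
end

section
/- Let C ⊆ (Fin 3)^N be a trifferent code and, for each x ∈ C, let A_x be a matrix on (Fin 3)^{d+1} with supp(A_x) = (Fin 3)^{d+1} ∖ S_x, where S_x = {(α, x_α) : α ∈ S} for a fixed set S of size N (indexing positions of the code). Then for any three distinct x¹, x², x³ ∈ C there is a line ℓ in direction d+1 with supp(A_{x¹}) ∩ supp(A_{x²}) ∩ supp(A_{x³}) ∩ ℓ = ∅. -/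
/-- For matrices `A_x` with support the complement of `S_x = {(α, x_α) : α ∈ S}`, any
three distinct words of a trifferent code give a line in direction `d+1` avoiding the
intersection of the three supports. -/
theorem trifferent_line {d : ℕ} (S : Finset (Fin d → Fin 3))
    (C : Finset ((Fin d → Fin 3) → Fin 3))
    (htriff : ∀ x ∈ C, ∀ y ∈ C, ∀ z ∈ C, x ≠ y → x ≠ z → y ≠ z →
      ∃ α ∈ S, x α ≠ y α ∧ x α ≠ z α ∧ y α ≠ z α)
    (A : ((Fin d → Fin 3) → Fin 3) → (Fin (d + 1) → Fin 3) → ℝ)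
    (hA : ∀ x ∈ C, ∀ β : Fin (d + 1) → Fin 3,
      A x β ≠ 0 ↔ β ∉ S.image (fun α => Fin.snoc α (x α))) :
    ∀ x ∈ C, ∀ y ∈ C, ∀ z ∈ C, x ≠ y → x ≠ z → y ≠ z →
      ∃ α ∈ S, ∀ j : Fin 3,
        A x (Fin.snoc α j) = 0 ∨ A y (Fin.snoc α j) = 0 ∨ A z (Fin.snoc α j) = 0 := by
  intro x hx y hy z hz hxy hxz hyz
  obtain ⟨α, hαS, h1, h2, h3⟩ := htriff x hx y hy z hz hxy hxz hyz
  refine ⟨α, hαS, fun j => ?_⟩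
  have key : ∀ w ∈ C, j = w α → A w (Fin.snoc α j) = 0 := by
    intro w hw hj
    by_contra h
    exact (hA w hw _).mp h (by subst hj; exact Finset.mem_image_of_mem _ hαS)
  have : j = x α ∨ j = y α ∨ j = z α := by
    simp only [Fin.ext_iff, ne_eq] at h1 h2 h3 ⊢
    have := j.isLt; have := (x α).isLt; have := (y α).isLt; have := (z α).isLt
    omega
  rcases this with h | h | h
  · exact Or.inl (key x hx h)
  · exact Or.inr (Or.inl (key y hy h))
  · exact Or.inr (Or.inr (key z hz h))
end

section
/- Let 𝒜 be a family of polystochastic matrices of order 3 and dimension d such that for any three distinct A₁, A₂, A₃ ∈ 𝒜 there is no vertex B of the polytope Ω_3^d with supp(B) ⊆ supp(A₁)∩supp(A₂)∩supp(A₃). Then the number of vertices of Ω_3^d is at least |𝒜|/2. -/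
/-- The polytope of polystochastic matrices. -/
def Omega (n d : ℕ) : Set ((Fin d → Fin n) → ℝ) := {A | Polystochastic A}


/-- The support map is injective on extreme points of Omega. -/
lemma supp_injOn {n d : ℕ} :
    Set.InjOn (fun B : (Fin d → Fin n) → ℝ => {β | B β ≠ 0})
      (Set.extremePoints ℝ (Omega n d)) := by
  intro B hB B' hB' hsupp
  simp only at hsupp
  have hBmem := hB.1
  have hB'mem := hB'.1
  set C : (Fin d → Fin n) → ℝ := B' - B with hC
  -- if C β ≠ 0 then B β > 0
  have hpos : ∀ β, C β ≠ 0 → 0 < B β := by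
    intro β hne
    rcases eq_or_ne (B β) 0 with h0 | h0
    · exfalso
      have : β ∉ {β | B β ≠ 0} := by simp [h0]
      rw [hsupp] at this
      simp only [Set.mem_setOf_eq, not_not] at this
      apply hne
      simp [hC, this, h0]
    · exact lt_of_le_of_ne (hBmem.1 β) (Ne.symm h0)
  have hne : (Finset.univ : Finset (Fin d → Fin n)).Nonempty ∨ True := Or.inr trivial
  classical
  set g : (Fin d → Fin n) → ℝ := fun β => if C β = 0 then 1 else B β / |C β| with hg
  by_cases hd : Nonempty (Fin d → Fin n)
  case neg =>
    funext β; exact absurd ⟨β⟩ hd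
  have huniv : (Finset.univ : Finset (Fin d → Fin n)).Nonempty := Finset.univ_nonempty
  set ε : ℝ := Finset.univ.inf' huniv g with hε
  have hεpos : 0 < ε := by
    rw [hε, Finset.lt_inf'_iff]
    intro β _
    rw [hg]
    by_cases h : C β = 0
    · simp [h]
    · simp only [h, if_false]
      exact div_pos (hpos β h) (abs_pos.2 h)
  have hbound : ∀ β, ε * |C β| ≤ B β := by
    intro β
    by_cases h : C β = 0
    · simp [h, hBmem.1 β]
    · have := Finset.inf'_le g (Finset.mem_univ β)
      rw [hg] at this
      simp only [h, if_false] at this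
      calc ε * |C β| ≤ (B β / |C β|) * |C β| := by
            apply mul_le_mul_of_nonneg_right this (abs_nonneg _)
        _ = B β := by field_simp
  -- membership of B ± ε • C in Omega
  have hmem : ∀ t : ℝ, |t| ≤ ε → (B + t • C) ∈ Omega n d := by
    intro t ht
    constructor
    · intro α
      have h1 : t * C α ≥ -(ε * |C α|) := by
        have : |t * C α| ≤ ε * |C α| := by
          rw [abs_mul]
          exact mul_le_mul_of_nonneg_right ht (abs_nonneg _)
        linarith [neg_abs_le (t * C α)]
      have := hbound α
      simp only [Pi.add_apply, Pi.smul_apply, smul_eq_mul]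
      linarith
    · intro α i
      have h1 := hBmem.2 α i
      have h2 := hB'mem.2 α i
      simp only [Pi.add_apply, Pi.smul_apply, smul_eq_mul, hC, Pi.sub_apply]
      rw [Finset.sum_add_distrib]
      rw [h1]
      have : ∑ j : Fin n, t * (B' (Function.update α i j) - B (Function.update α i j)) = t * (1 - 1) := by
        rw [← Finset.mul_sum, Finset.sum_sub_distrib, h1, h2]
      rw [this]; ring
  -- B is in the open segment of B + εC and B - εC
  have hseg : B ∈ openSegment ℝ (B + ε • C) (B + (-ε) • C) := by
    refine ⟨1/2, 1/2, by norm_num, by norm_num, by norm_num, ?_⟩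
    funext β
    simp only [Pi.add_apply, Pi.smul_apply, smul_eq_mul, Pi.neg_apply]
    ring
  have heq := hB.2 (hmem ε (by rw [abs_of_pos hεpos]))
    (hmem (-ε) (by rw [abs_neg, abs_of_pos hεpos])) hseg
  have hC0 : C = 0 := by
    funext β
    have := congrFun heq β
    simp only [Pi.add_apply, Pi.smul_apply, smul_eq_mul, Pi.zero_apply] at this ⊢
    have : ε * C β = 0 := by linarith
    rcases mul_eq_zero.1 this with h | h
    · exact absurd h (ne_of_gt hεpos)
    · exact h
  have := congrArg (fun X => X + B) hC0
  simpa [hC] using this.symm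


lemma exists_vertex {d : ℕ} (A : (Fin d → Fin 3) → ℝ) (hA : Polystochastic A) :
    ∃ B ∈ Set.extremePoints ℝ (Omega 3 d), ∀ β, B β ≠ 0 → A β ≠ 0 := by
  classical
  rcases Nat.eq_zero_or_pos d with rfl | hd
  · -- d = 0 : take B = 0
    refine ⟨0, ?_, by simp⟩
    constructor
    · exact ⟨fun α => le_refl 0, fun α i => i.elim0⟩
    · rintro x₁ hx₁ x₂ hx₂ ⟨a, b, ha, hb, hab, heq⟩
      funext β
      · have h := congrFun heq β
        simp only [Pi.add_apply, Pi.smul_apply, smul_eq_mul, Pi.zero_apply] at h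
        have h1 : 0 ≤ a * x₁ β := mul_nonneg ha.le (hx₁.1 β)
        have h2 : 0 ≤ b * x₂ β := mul_nonneg hb.le (hx₂.1 β)
        have : a * x₁ β = 0 := by linarith
        have := (mul_eq_zero.1 this).resolve_left (ne_of_gt ha)
        simpa using this
  · set F : Set ((Fin d → Fin 3) → ℝ) :=
      {X ∈ Omega 3 d | ∀ β, A β = 0 → X β = 0} with hF
    have hAF : A ∈ F := ⟨hA, fun β h => h⟩
    have hFclosed : IsClosed F := by
      have h1 : IsClosed {X : (Fin d → Fin 3) → ℝ | ∀ α, 0 ≤ X α} := by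
        rw [Set.setOf_forall]
        exact isClosed_iInter fun α => isClosed_le continuous_const (continuous_apply α)
      have h2 : IsClosed {X : (Fin d → Fin 3) → ℝ |
          ∀ (α : Fin d → Fin 3) (i : Fin d), ∑ j : Fin 3, X (Function.update α i j) = 1} := by
        rw [Set.setOf_forall]
        refine isClosed_iInter fun α => ?_
        rw [Set.setOf_forall]
        refine isClosed_iInter fun i => ?_
        exact isClosed_eq (by continuity) continuous_const
      have h3 : IsClosed {X : (Fin d → Fin 3) → ℝ | ∀ β, A β = 0 → X β = 0} := by
        rw [Set.setOf_forall]
        refine isClosed_iInter fun β => ?_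
        by_cases h : A β = 0
        · simp only [h, forall_true_left]
          exact isClosed_eq (continuous_apply β) continuous_const
        · convert isClosed_univ using 1
          ext X; simp [h]
      have : F = ({X | ∀ α, 0 ≤ X α} ∩ {X | ∀ (α : Fin d → Fin 3) (i : Fin d),
          ∑ j : Fin 3, X (Function.update α i j) = 1}) ∩
          {X | ∀ β, A β = 0 → X β = 0} := by
        ext X
        simp only [hF, Set.mem_setOf_eq, Set.mem_inter_iff, Set.mem_sep_iff]
        constructor
        · rintro ⟨⟨hX1, hX2⟩, hX3⟩; exact ⟨⟨hX1, hX2⟩, hX3⟩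
        · rintro ⟨⟨hX1, hX2⟩, hX3⟩; exact ⟨⟨hX1, hX2⟩, hX3⟩
      rw [this]
      exact ((h1.inter h2).inter h3)
    have hsub : F ⊆ Set.Icc (0 : (Fin d → Fin 3) → ℝ) 1 := by
      intro X hX
      constructor
      · intro α; exact hX.1.1 α
      · intro α
        have hsum := hX.1.2 α ⟨0, hd⟩
        have hsingle : X (Function.update α ⟨0, hd⟩ (α ⟨0, hd⟩)) ≤
            ∑ j : Fin 3, X (Function.update α ⟨0, hd⟩ j) :=
          Finset.single_le_sum (fun j _ => hX.1.1 _) (Finset.mem_univ _)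
        rw [Function.update_eq_self] at hsingle
        rw [hsum] at hsingle
        exact hsingle
    have hcomp : IsCompact F := isCompact_Icc.of_isClosed_subset hFclosed hsub
    obtain ⟨B, hB⟩ := hcomp.extremePoints_nonempty ⟨A, hAF⟩
    have hext : IsExtreme ℝ (Omega 3 d) F := by
      constructor
      · exact fun X hX => hX.1
      · rintro x₁ hx₁ x₂ hx₂ x hx ⟨a, b, ha, hb, hab, heq⟩
        have key : ∀ β, A β = 0 → x₁ β = 0 ∧ x₂ β = 0 := by
          intro β hβ
          have hx0 : x β = 0 := hx.2 β hβ
          have h := congrFun heq β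
          simp only [Pi.add_apply, Pi.smul_apply, smul_eq_mul] at h
          rw [hx0] at h
          have h1 : 0 ≤ a * x₁ β := mul_nonneg ha.le (hx₁.1 β)
          have h2 : 0 ≤ b * x₂ β := mul_nonneg hb.le (hx₂.1 β)
          constructor
          · have : a * x₁ β = 0 := by linarith
            exact (mul_eq_zero.1 this).resolve_left (ne_of_gt ha)
          · have : b * x₂ β = 0 := by linarith
            exact (mul_eq_zero.1 this).resolve_left (ne_of_gt hb)
        exact ⟨hx₁, fun β hβ => (key β hβ).1⟩
    refine ⟨B, hext.extremePoints_subset_extremePoints hB, ?_⟩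
    intro β hβ hAβ
    exact hβ (hB.1.2 β hAβ)

/-- The polytope has finitely many extreme points. -/
lemma extremePoints_finite {n d : ℕ} : (Set.extremePoints ℝ (Omega n d)).Finite :=
  Set.Finite.of_finite_image (Set.toFinite _) supp_injOn

/-- If no vertex of `Ω_3^d` has its support inside the intersection of the supports of
any three distinct members of a family `𝒜` of polystochastic matrices, then `Ω_3^d` has
at least `|𝒜|/2` vertices. -/
theorem many_vertices {d : ℕ} (𝒜 : Finset ((Fin d → Fin 3) → ℝ))
    (hpoly : ∀ A ∈ 𝒜, Polystochastic A)
    (h3 : ∀ A₁ ∈ 𝒜, ∀ A₂ ∈ 𝒜, ∀ A₃ ∈ 𝒜, A₁ ≠ A₂ → A₁ ≠ A₃ → A₂ ≠ A₃ →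
      ¬ ∃ B ∈ Set.extremePoints ℝ (Omega 3 d),
        ∀ β, B β ≠ 0 → A₁ β ≠ 0 ∧ A₂ β ≠ 0 ∧ A₃ β ≠ 0) :
    (𝒜.card : ℝ) / 2 ≤ ((Set.extremePoints ℝ (Omega 3 d)).ncard : ℝ) := by
  classical
  set E := Set.extremePoints ℝ (Omega 3 d) with hE
  have hEfin : E.Finite := extremePoints_finite
  choose! f hf1 hf2 using fun A (hA : A ∈ 𝒜) => exists_vertex A (hpoly A hA)
  have hfiber : ∀ b ∈ 𝒜.image f, (𝒜.filter fun A => f A = b).card ≤ 2 := by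
    intro b hb
    by_contra hgt
    push_neg at hgt
    obtain ⟨A₁, h₁, A₂, h₂, A₃, h₃, h12, h13, h23⟩ := Finset.two_lt_card.1 hgt
    rw [Finset.mem_filter] at h₁ h₂ h₃
    refine h3 A₁ h₁.1 A₂ h₂.1 A₃ h₃.1 h12 h13 h23 ⟨b, ?_, ?_⟩
    · rw [← h₁.2]; exact hf1 A₁ h₁.1
    · intro β hβ
      refine ⟨hf2 A₁ h₁.1 β (by rwa [h₁.2]),
        hf2 A₂ h₂.1 β (by rwa [h₂.2]), hf2 A₃ h₃.1 β (by rwa [h₃.2])⟩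
  have hcard : 𝒜.card ≤ 2 * (𝒜.image f).card := Finset.card_le_mul_card_image _ 2 hfiber
  have himg : ↑(𝒜.image f) ⊆ E := by
    intro x hx
    rw [Finset.coe_image] at hx
    obtain ⟨A, hA, rfl⟩ := hx
    exact hf1 A hA
  have himgcard : (𝒜.image f).card ≤ E.ncard := by
    have := Set.ncard_le_ncard himg hEfin
    rwa [Set.ncard_coe_finset] at this
  have : (𝒜.card : ℝ) ≤ 2 * (E.ncard : ℝ) := by
    have : 𝒜.card ≤ 2 * E.ncard := hcard.trans (by omega)
    exact_mod_cast this
  linarith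
end
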